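/- Let k be a field of characteristic different from 2, R = k[x,y], R^{S₂} ⊆ R the subalgebra of symmetric polynomials, and B = R⊗_{R^{S₂}}R (a commutative ring). Set v := y⊗1 − 1⊗y and Γ := (y−x)⊗1 + 1⊗(y−x) in B. Then the kernel of the multiplication-by-v endomorphism of B equals R·Γ (left R-multiples of Γ) and is free of rank one as a left R-module with basis {Γ}; moreover the quotient B/vB is isomorphic to R as an (R,R)-bimodule, via the map induced by the multiplication map br : B → R. -/

import Mathlib

set_option synthInstance.maxHeartbeats 1000000
set_option maxHeartbeats 800000

open MvPolynomial TensorProduct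

/-- `R = k[x,y]` (`x = X 0`, `y = X 1`). -/
noncomputable abbrev stmt17R (k : Type) [Field k] := MvPolynomial (Fin 2) k

/-- `R^{S₂}`, the subalgebra of symmetric polynomials. -/
noncomputable abbrev stmt17S (k : Type) [Field k] : Subalgebra k (stmt17R k) :=
  MvPolynomial.symmetricSubalgebra (Fin 2) k

/-- The Soergel bimodule `B = R ⊗_{R^{S₂}} R` (a commutative ring). -/
noncomputable abbrev stmt17B (k : Type) [Field k] :=
  (stmt17R k) ⊗[↥(stmt17S k)] (stmt17R k)

/-- `v = y⊗1 − 1⊗y ∈ B`. -/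
noncomputable abbrev stmt17v (k : Type) [Field k] : stmt17B k :=
  (X 1 : stmt17R k) ⊗ₜ[↥(stmt17S k)] (1 : stmt17R k)
    - (1 : stmt17R k) ⊗ₜ[↥(stmt17S k)] (X 1 : stmt17R k)

/-- `Γ = (y−x)⊗1 + 1⊗(y−x) ∈ B`. -/
noncomputable abbrev stmt17Γ (k : Type) [Field k] : stmt17B k :=
  ((X 1 - X 0 : stmt17R k) ⊗ₜ[↥(stmt17S k)] (1 : stmt17R k))
    + ((1 : stmt17R k) ⊗ₜ[↥(stmt17S k)] (X 1 - X 0 : stmt17R k))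

namespace Stmt17Aux

variable {k : Type} [Field k]

lemma fin2_cases (a b : Fin 2) (h : a ≠ b) : (a = 0 ∧ b = 1) ∨ (a = 1 ∧ b = 0) := by
  revert h; revert a b; decide

lemma sym1 : (X 0 + X 1 : MvPolynomial (Fin 2) k).IsSymmetric := by
  intro σ
  rw [map_add, rename_X, rename_X]
  rcases fin2_cases (σ 0) (σ 1) (fun h => absurd (σ.injective h) (by decide)) with ⟨h0,h1⟩|⟨h0,h1⟩ <;>
    rw [h0, h1]
  ring

lemma sym2 : (X 0 * X 1 : MvPolynomial (Fin 2) k).IsSymmetric := by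
  intro σ
  rw [map_mul, rename_X, rename_X]
  rcases fin2_cases (σ 0) (σ 1) (fun h => absurd (σ.injective h) (by decide)) with ⟨h0,h1⟩|⟨h0,h1⟩ <;>
    rw [h0, h1]
  ring

lemma sym2c : ((2 : MvPolynomial (Fin 2) k)).IsSymmetric := fun σ => map_ofNat _ 2

lemma decomp (g : MvPolynomial (Fin 2) k) :
    ∃ s₀ s₁ : MvPolynomial (Fin 2) k, s₀.IsSymmetric ∧ s₁.IsSymmetric ∧ g = s₀ + s₁ * X 1 := by
  induction g using MvPolynomial.induction_on with
  | C a => exact ⟨C a, 0, fun σ => rename_C σ a, fun σ => by simp, by ring⟩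
  | add p q hp hq =>
    obtain ⟨a, b, ha, hb, rfl⟩ := hp
    obtain ⟨c, d, hc, hd, rfl⟩ := hq
    exact ⟨a + c, b + d, ha.add hc, hb.add hd, by ring⟩
  | mul_X p i hp =>
    obtain ⟨a, b, ha, hb, rfl⟩ := hp
    have hi : i = 0 ∨ i = 1 := by fin_cases i <;> simp
    rcases hi with rfl | rfl
    · exact ⟨a * (X 0 + X 1) + b * (X 0 * X 1), -a,
        (ha.mul sym1).add (hb.mul sym2), ha.neg, by ring⟩
    · exact ⟨-(b * (X 0 * X 1)), a + b * (X 0 + X 1),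
        (hb.mul sym2).neg, ha.add (hb.mul sym1), by ring⟩

lemma move (p : MvPolynomial (Fin 2) k) (hp : p.IsSymmetric) (f g : stmt17R k) :
    (p * f) ⊗ₜ[↥(stmt17S k)] g = f ⊗ₜ[↥(stmt17S k)] (p * g) := by
  have h := TensorProduct.smul_tmul (R := ↥(stmt17S k)) (R' := ↥(stmt17S k))
    (⟨p, (MvPolynomial.mem_symmetricSubalgebra p).mpr hp⟩ : ↥(stmt17S k)) f g
  simpa [Algebra.smul_def] using h

noncomputable def sig (k : Type) [Field k] : stmt17R k →ₐ[↥(stmt17S k)] stmt17R k where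
  toRingHom := (rename (Equiv.swap (0 : Fin 2) 1)).toRingHom
  commutes' := fun s => (MvPolynomial.mem_symmetricSubalgebra s.1).mp s.2 _

noncomputable def Phi2 (k : Type) [Field k] : stmt17B k →ₐ[↥(stmt17S k)] stmt17R k :=
  Algebra.TensorProduct.lift (AlgHom.id ↥(stmt17S k) (stmt17R k)) (sig k)
    (fun x y => Commute.all x ((sig k) y))

lemma Phi2_tmul (f g : stmt17R k) :
    Phi2 k (f ⊗ₜ[↥(stmt17S k)] g) = f * rename (Equiv.swap (0 : Fin 2) 1) g := by
  exact Algebra.TensorProduct.lift_tmul _ _ _ f g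

noncomputable def Phi1 (k : Type) [Field k] : stmt17B k →ₐ[↥(stmt17S k)] stmt17R k :=
  Algebra.TensorProduct.lift (AlgHom.id ↥(stmt17S k) (stmt17R k))
    (AlgHom.id ↥(stmt17S k) (stmt17R k)) (fun x y => Commute.all x y)

lemma Phi1_tmul (f g : stmt17R k) : Phi1 k (f ⊗ₜ[↥(stmt17S k)] g) = f * g := by
  exact Algebra.TensorProduct.lift_tmul _ _ _ f g

lemma my_tmul_mul (f g f' g' : stmt17R k) :
    (f ⊗ₜ[↥(stmt17S k)] g : stmt17B k) * (f' ⊗ₜ[↥(stmt17S k)] g') =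
      (f * f') ⊗ₜ[↥(stmt17S k)] (g * g') := Algebra.TensorProduct.tmul_mul_tmul f f' g g'

lemma my_sub_mul (u w b : stmt17B k) : (u - w) * b = u * b - w * b := sub_mul u w b

lemma my_mul_add (u w b : stmt17B k) : u * (w + b) = u * w + u * b := mul_add u w b

lemma brepr (b : stmt17B k) : ∃ a c : stmt17R k,
    b = a ⊗ₜ[↥(stmt17S k)] (1 : stmt17R k) + c ⊗ₜ[↥(stmt17S k)] (X 1 : stmt17R k) := by
  induction b using TensorProduct.induction_on with
  | zero => exact ⟨0, 0, by simp⟩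
  | tmul f g =>
    obtain ⟨s₀, s₁, h₀, h₁, rfl⟩ := decomp g
    refine ⟨s₀ * f, s₁ * f, ?_⟩
    rw [TensorProduct.tmul_add, move s₀ h₀, move s₁ h₁, mul_one]
  | add x y hx hy =>
    obtain ⟨a, c, rfl⟩ := hx
    obtain ⟨a', c', rfl⟩ := hy
    exact ⟨a + a', c + c', by rw [TensorProduct.add_tmul, TensorProduct.add_tmul]; abel⟩

lemma coord_inj (a c : stmt17R k)
    (h : a ⊗ₜ[↥(stmt17S k)] (1 : stmt17R k) + c ⊗ₜ[↥(stmt17S k)] (X 1 : stmt17R k) = 0) :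
    a = 0 ∧ c = 0 := by
  have h1 : a + c * X 1 = 0 := by
    have := congrArg (Phi1 k) h
    simpa [Phi1_tmul] using this
  have h2 : a + c * X 0 = 0 := by
    have := congrArg (Phi2 k) h
    simpa [Phi2_tmul] using this
  have hc : c * (X 1 - X 0) = 0 := by linear_combination h1 - h2
  have hX : (X 1 - X 0 : stmt17R k) ≠ 0 :=
    sub_ne_zero.mpr (fun hh => absurd (X_injective hh) (by decide))
  have hc0 : c = 0 := by
    rcases mul_eq_zero.mp hc with h | h
    · exact h
    · exact absurd h hX
  subst hc0
  exact ⟨by simpa using h1, rfl⟩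

lemma hyy (c : stmt17R k) : (c ⊗ₜ[↥(stmt17S k)] (X 1 * X 1) : stmt17B k)
    = ((X 0 + X 1) * c) ⊗ₜ[↥(stmt17S k)] (X 1 : stmt17R k)
      - ((X 0 * X 1) * c) ⊗ₜ[↥(stmt17S k)] (1 : stmt17R k) := by
  rw [move _ sym1, move _ sym2, ← TensorProduct.tmul_sub]
  congr 1
  ring

lemma mulv (a c : stmt17R k) :
    stmt17v k * (a ⊗ₜ[↥(stmt17S k)] (1 : stmt17R k) + c ⊗ₜ[↥(stmt17S k)] (X 1 : stmt17R k)) =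
      (X 1 * a + X 0 * X 1 * c) ⊗ₜ[↥(stmt17S k)] (1 : stmt17R k)
        + (-(a + X 0 * c)) ⊗ₜ[↥(stmt17S k)] (X 1 : stmt17R k) := by
  simp only [stmt17v]
  simp only [my_mul_add, my_sub_mul, my_tmul_mul, one_mul, mul_one]
  rw [hyy c, show ((X 0 + X 1) * c : stmt17R k) = X 0 * c + X 1 * c from by ring]
  rw [TensorProduct.add_tmul, TensorProduct.add_tmul, TensorProduct.neg_tmul,
    TensorProduct.add_tmul]
  abel

lemma gammaCoord (f : stmt17R k) :
    (f ⊗ₜ[↥(stmt17S k)] (1 : stmt17R k)) * stmt17Γ k =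
      (-(2 * X 0 * f)) ⊗ₜ[↥(stmt17S k)] (1 : stmt17R k)
        + (2 * f) ⊗ₜ[↥(stmt17S k)] (X 1 : stmt17R k) := by
  simp only [stmt17Γ]
  simp only [my_mul_add, my_tmul_mul, one_mul, mul_one]
  have e : f ⊗ₜ[↥(stmt17S k)] (X 1 - X 0 : stmt17R k)
      = (2 * f) ⊗ₜ[↥(stmt17S k)] (X 1 : stmt17R k)
        - ((X 0 + X 1) * f) ⊗ₜ[↥(stmt17S k)] (1 : stmt17R k) := by
    rw [move _ sym2c, move _ sym1, ← TensorProduct.tmul_sub]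
    congr 1
    ring
  rw [e, show (-(2 * X 0 * f) : stmt17R k) = f * (X 1 - X 0) - (X 0 + X 1) * f from by ring,
    TensorProduct.sub_tmul]
  abel

lemma gammaRepr : stmt17Γ k =
    (-(2 * X 0) : stmt17R k) ⊗ₜ[↥(stmt17S k)] (1 : stmt17R k)
      + (2 : stmt17R k) ⊗ₜ[↥(stmt17S k)] (X 1 : stmt17R k) := by
  have h := gammaCoord (k := k) 1
  rw [show ((1:stmt17R k) ⊗ₜ[↥(stmt17S k)] (1:stmt17R k) : stmt17B k) = 1 from
      (Algebra.TensorProduct.one_def).symm, one_mul] at h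
  rw [h, show (-(2 * X 0 * 1) : stmt17R k) = -(2 * X 0) from by ring,
    show (2 * 1 : stmt17R k) = 2 from by ring]

lemma vGamma : stmt17v k * stmt17Γ k = 0 := by
  rw [gammaRepr, mulv]
  rw [show (X 1 * -(2 * X 0) + X 0 * X 1 * 2 : stmt17R k) = 0 from by ring,
    show (-(-(2 * X 0) + X 0 * 2) : stmt17R k) = 0 from by ring,
    TensorProduct.zero_tmul, TensorProduct.zero_tmul, add_zero]

lemma two_ne_zero' (hchar : (2:k) ≠ 0) : (2 : stmt17R k) ≠ 0 := by
  intro h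
  rw [show (2 : stmt17R k) = C (2:k) from (map_ofNat C 2).symm] at h
  exact hchar (by simpa using h)

end Stmt17Aux

open Stmt17Aux in
theorem stmt_17 (k : Type) [Field k] (hchar : (2 : k) ≠ 0)
    (br : stmt17B k →ₗ[k] stmt17R k)
    (hbr : ∀ f g : stmt17R k, br (f ⊗ₜ[↥(stmt17S k)] g) = f * g) :
    (∀ b : stmt17B k,
        stmt17v k * b = 0 ↔
          ∃ f : stmt17R k, b = (f ⊗ₜ[↥(stmt17S k)] (1 : stmt17R k)) * stmt17Γ k) ∧
    (∀ f : stmt17R k,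
        (f ⊗ₜ[↥(stmt17S k)] (1 : stmt17R k)) * stmt17Γ k = 0 → f = 0) ∧
    Function.Surjective br ∧
    (∀ b : stmt17B k, br b = 0 ↔ ∃ c : stmt17B k, b = stmt17v k * c) := by
  have hinv : (C (2⁻¹:k) : stmt17R k) * 2 = 1 := by
    rw [show (2 : stmt17R k) = C (2:k) from (map_ofNat C 2).symm, ← C_mul,
      inv_mul_cancel₀ hchar, C_1]
  refine ⟨?_, ?_, ?_, ?_⟩
  · -- kernel of multiplication by v
    intro b
    constructor
    · intro hvb
      obtain ⟨a, c, rfl⟩ := brepr b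
      rw [mulv] at hvb
      obtain ⟨-, h2⟩ := coord_inj _ _ hvb
      refine ⟨C (2⁻¹:k) * c, ?_⟩
      rw [gammaCoord]
      congr 1
      · congr 1
        linear_combination (X 0 * c) * hinv - h2
      · congr 1
        linear_combination (-c) * hinv
    · rintro ⟨f, rfl⟩
      calc stmt17v k * ((f ⊗ₜ[↥(stmt17S k)] (1:stmt17R k)) * stmt17Γ k)
          = (f ⊗ₜ[↥(stmt17S k)] (1:stmt17R k)) * (stmt17v k * stmt17Γ k) :=
            mul_left_comm _ _ _
        _ = 0 := by rw [vGamma, mul_zero]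
  · -- Γ is a basis
    intro f hf
    rw [gammaCoord] at hf
    obtain ⟨-, h2⟩ := coord_inj _ _ hf
    linear_combination (C (2⁻¹:k)) * h2 - f * hinv
  · -- surjectivity of br
    intro r
    exact ⟨r ⊗ₜ[↥(stmt17S k)] 1, by rw [hbr, mul_one]⟩
  · -- kernel of br is vB
    intro b
    constructor
    · intro hb
      obtain ⟨a, c, rfl⟩ := brepr b
      rw [map_add, hbr, hbr, mul_one] at hb
      refine ⟨(-c) ⊗ₜ[↥(stmt17S k)] (1:stmt17R k), ?_⟩
      have h := mulv (k := k) (-c) 0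
      rw [TensorProduct.zero_tmul, add_zero,
        show (X 1 * (-c) + X 0 * X 1 * 0 : stmt17R k) = -(c * X 1) from by ring,
        show (-((-c) + X 0 * 0) : stmt17R k) = c from by ring] at h
      rw [h]
      congr 1
      congr 1
      linear_combination hb
    · rintro ⟨c, rfl⟩
      induction c using TensorProduct.induction_on with
      | zero => rw [mul_zero, map_zero]
      | tmul f g =>
        have h : stmt17v k * (f ⊗ₜ[↥(stmt17S k)] g) =
            (X 1 * f) ⊗ₜ[↥(stmt17S k)] g - f ⊗ₜ[↥(stmt17S k)] (X 1 * g) := by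
          simp only [stmt17v]
          simp only [my_sub_mul, my_tmul_mul, one_mul]
        rw [h, map_sub, hbr, hbr]
        ring
      | add x y hx hy =>
        rw [my_mul_add, map_add, hx, hy, add_zero]
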